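/- Let (x_k) be a sequence in ℝⁿ, d: ℝⁿ → ℝ_{≥0}, and suppose there exist t ∈ ℕ, t ≥ 1, and μ̄ ∈ (0,1) such that d(x_{kt+n}) < μ̄^{kt}·d(x_n) for all k ≥ 1 and all n (whenever d(x_n) > 0). Then for any μ ∈ (μ̄, 1) there exists N ∈ ℕ such that d(x_k) ≤ μ^k for all k > N. -/

import Mathlib

/-- Geometric decay along arithmetic subprogressions of step `t` implies eventual
R-linear decay with any slightly worse rate `μ ∈ (μ̄, 1)`. -/
theorem decay_along_progressions_imp_linear {n : ℕ}
    (x : ℕ → EuclideanSpace ℝ (Fin n)) (d : EuclideanSpace ℝ (Fin n) → ℝ)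
    (hd : ∀ y, 0 ≤ d y) (t : ℕ) (ht : 1 ≤ t) (μbar : ℝ) (hμbar : μbar ∈ Set.Ioo (0:ℝ) 1)
    (hdecay : ∀ m k : ℕ, 1 ≤ k → 0 < d (x m) →
      d (x (k * t + m)) < μbar ^ (k * t) * d (x m)) :
    ∀ μ : ℝ, μbar < μ → μ < 1 → ∃ N : ℕ, ∀ k > N, d (x k) ≤ μ ^ k := by
  intro μ hμ1 hμ2
  have hb0 : 0 < μbar := hμbar.1
  have hμ0 : 0 < μ := lt_trans hb0 hμ1
  -- per-residue statement
  have key : ∀ r, ∃ M, ∀ k ≥ M, d (x (k * t + r)) ≤ μ ^ (k * t + r) := by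
    intro r
    by_cases h0 : ∀ k, d (x (k * t + r)) = 0
    · exact ⟨0, fun k _ => by rw [h0 k]; positivity⟩
    · push_neg at h0
      obtain ⟨k0, hk0⟩ := h0
      have hC : 0 < d (x (k0 * t + r)) := (hd _).lt_of_ne (Ne.symm hk0)
      set C := d (x (k0 * t + r)) with hCdef
      set q : ℝ := (μbar / μ) ^ t with hqdef
      set A : ℝ := C / μbar ^ (k0 * t) with hAdef
      have hq1 : q < 1 := by
        apply pow_lt_one₀ (by positivity)
        · rw [div_lt_one hμ0]; exact hμ1
        · omega
      have htend : Filter.Tendsto (fun k => A * q ^ k) Filter.atTop (nhds 0) := by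
        have := (tendsto_pow_atTop_nhds_zero_of_lt_one (by positivity) hq1).const_mul A
        simpa using this
      have hev := htend.eventually_lt_const (show (0:ℝ) < μ ^ r by positivity)
      obtain ⟨K, hK⟩ := Filter.eventually_atTop.mp hev
      refine ⟨max K (k0 + 1), fun k hk => ?_⟩
      have hkK : K ≤ k := le_trans (le_max_left _ _) hk
      have hkk0 : k0 + 1 ≤ k := le_trans (le_max_right _ _) hk
      have hdec := hdecay (k0 * t + r) (k - k0) (by omega) hC
      have hidx : (k - k0) * t + (k0 * t + r) = k * t + r := by
        have : (k - k0) * t + k0 * t = k * t := by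
          rw [← add_mul]; congr 1; omega
        omega
      rw [hidx] at hdec
      have hexp : μbar ^ ((k - k0) * t) * C = A * μbar ^ (k * t) := by
        have hsplit : k * t = (k - k0) * t + k0 * t := by
          rw [← add_mul]; congr 1; omega
        rw [hAdef, hsplit, pow_add]
        field_simp
      have hbar : μbar ^ (k * t) = q ^ k * μ ^ (k * t) := by
        rw [hqdef, ← pow_mul, mul_comm t k, ← mul_pow, div_mul_cancel₀ _ (ne_of_gt hμ0)]
      have h1 : d (x (k * t + r)) < A * q ^ k * μ ^ (k * t) := by
        calc d (x (k * t + r)) < μbar ^ ((k - k0) * t) * C := hdec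
          _ = A * μbar ^ (k * t) := hexp
          _ = A * q ^ k * μ ^ (k * t) := by rw [hbar]; ring
      have h2 : A * q ^ k * μ ^ (k * t) ≤ μ ^ r * μ ^ (k * t) :=
        mul_le_mul_of_nonneg_right (le_of_lt (hK k hkK)) (by positivity)
      calc d (x (k * t + r)) ≤ μ ^ r * μ ^ (k * t) := le_of_lt (lt_of_lt_of_le h1 h2)
        _ = μ ^ (k * t + r) := by rw [pow_add]; ring
  choose M hM using key
  set S := Finset.sup (Finset.range t) M with hS
  refine ⟨t * (S + 1), fun j hj => ?_⟩
  have ht0 : 0 < t := ht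
  have hr : j % t < t := Nat.mod_lt _ ht0
  have hdm : j / t * t + j % t = j := by rw [mul_comm]; exact Nat.div_add_mod j t
  have hMS : M (j % t) ≤ S := Finset.le_sup (Finset.mem_range.mpr hr)
  have hk : M (j % t) ≤ j / t := by
    have h1 : t * (S + 1) < j := hj
    have h2 : j < j / t * t + t := by omega
    have h3 : t * (S + 1) < t * (j / t + 1) := by
      calc t * (S + 1) < j := h1
        _ < j / t * t + t := h2
        _ = t * (j / t + 1) := by ring
    have := Nat.lt_of_mul_lt_mul_left h3
    omega
  have := hM (j % t) (j / t) hk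
  rwa [hdm] at this
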